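/- Any single-hidden-layer ReLU network, restricted to a bounded domain D ⊂ ℝ^d with ‖x‖ ≤ X_B for all x ∈ D and X_B > 0, admits an equivalent form with unit weight vectors and thresholds bounded by X_B: for every natural number N, coefficients c : Fin N → ℝ, weight vectors w : Fin N → ℝ^d, and thresholds b : Fin N → ℝ, there exist a natural number M, coefficients ĉ : Fin M → ℝ, weight vectors ŵ : Fin M → ℝ^d with ‖ŵ_j‖ = 1 for every j, and thresholds b̂ : Fin M → ℝ with −X_B ≤ b̂_j ≤ X_B for every j, such that for all x ∈ D, ∑_{j=1}^{N} c_j · max(0, ⟨w_j, x⟩ + b_j) = ∑_{j=1}^{M} ĉ_j · max(0, ⟨ŵ_j, x⟩ + b̂_j). -/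
import Mathlib


open scoped RealInnerProductSpace
open Finset

/-- Any single-hidden-layer ReLU network, restricted to a bounded domain
`D ⊆ ℝ^d` with `‖x‖ ≤ X_B` on `D`, admits an equivalent form with unit
weight vectors and thresholds bounded by `X_B`. -/
theorem relu_network_unit_weights_bounded_thresholds (d : ℕ) (hd : 1 ≤ d)
    (D : Set (EuclideanSpace ℝ (Fin d))) (XB : ℝ) (hXB : 0 < XB)
    (hD : ∀ x ∈ D, ‖x‖ ≤ XB) (N : ℕ)
    (c : Fin N → ℝ) (w : Fin N → EuclideanSpace ℝ (Fin d)) (b : Fin N → ℝ) :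
    ∃ (M : ℕ) (c' : Fin M → ℝ) (w' : Fin M → EuclideanSpace ℝ (Fin d))
      (b' : Fin M → ℝ),
      (∀ j, ‖w' j‖ = 1) ∧
      (∀ j, -XB ≤ b' j ∧ b' j ≤ XB) ∧
      ∀ x ∈ D,
        ∑ j, c j * max 0 (⟪w j, x⟫ + b j)
          = ∑ j, c' j * max 0 (⟪w' j, x⟫ + b' j) := by
  classical
  set e0 : EuclideanSpace ℝ (Fin d) := EuclideanSpace.single ⟨0, hd⟩ 1 with he0def
  have he0 : ‖e0‖ = 1 := by simp [he0def]
  set β : Fin N → ℝ := fun j => b j / ‖w j‖ with hβ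
  set u : Fin N → EuclideanSpace ℝ (Fin d) :=
    fun j => if w j = 0 ∨ β j < -XB then e0 else ‖w j‖⁻¹ • w j with hu
  set t : Fin N → ℝ := fun j => if w j = 0 ∨ β j < -XB then XB else min (β j) XB with ht
  set a : Fin N → ℝ := fun j => if w j = 0 ∨ β j < -XB then 0 else c j * ‖w j‖ with ha
  set k : Fin N → ℝ := fun j =>
    if w j = 0 then c j * max 0 (b j)
    else if XB < β j then c j * ‖w j‖ * (β j - XB) else 0 with hk
  have hu1 : ∀ j, ‖u j‖ = 1 := by
    intro j
    by_cases h : w j = 0 ∨ β j < -XB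
    · simp [hu, h, he0]
    · push_neg at h
      simp only [hu, if_neg (not_or.mpr ⟨h.1, not_lt.mpr h.2⟩)]
      exact norm_smul_inv_norm h.1
  have ht1 : ∀ j, -XB ≤ t j ∧ t j ≤ XB := by
    intro j
    by_cases h : w j = 0 ∨ β j < -XB
    · simp only [ht, if_pos h]; exact ⟨by linarith, le_refl _⟩
    · push_neg at h
      simp only [ht, if_neg (not_or.mpr ⟨h.1, not_lt.mpr h.2⟩)]
      exact ⟨le_min h.2 (by linarith), min_le_right _ _⟩
  -- key pointwise identities
  have key : ∀ x ∈ D, ∀ j, c j * max 0 (⟪w j, x⟫ + b j)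
      = a j * max 0 (⟪u j, x⟫ + t j) + k j := by
    intro x hx j
    have hxB := hD x hx
    by_cases hw0 : w j = 0
    · have hz : ⟪w j, x⟫ = 0 := by rw [hw0]; exact inner_zero_left x
      rw [hz, zero_add]
      have : a j = 0 := by simp [ha, hw0]
      rw [this, zero_mul, zero_add]
      simp only [hk]
      rw [if_pos hw0]
    · have hwpos : (0:ℝ) < ‖w j‖ := norm_pos_iff.mpr hw0
      have hinner : ⟪w j, x⟫ = ‖w j‖ * ⟪‖w j‖⁻¹ • w j, x⟫ := by
        rw [real_inner_smul_left]; field_simp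
      have habs : |⟪‖w j‖⁻¹ • w j, x⟫| ≤ XB := by
        calc |⟪‖w j‖⁻¹ • w j, x⟫| ≤ ‖‖w j‖⁻¹ • w j‖ * ‖x‖ := abs_real_inner_le_norm _ _
        _ ≤ 1 * XB := by
            apply mul_le_mul _ hxB (norm_nonneg _) zero_le_one
            exact le_of_eq (norm_smul_inv_norm hw0)
        _ = XB := one_mul _
      have hup : -XB ≤ ⟪‖w j‖⁻¹ • w j, x⟫ ∧ ⟪‖w j‖⁻¹ • w j, x⟫ ≤ XB := abs_le.mp habs
      have hb_eq : b j = ‖w j‖ * β j := by rw [hβ]; field_simp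
      by_cases hlow : β j < -XB
      · -- term is 0
        have h0 : ⟪w j, x⟫ + b j ≤ 0 := by
          rw [hinner, hb_eq, ← mul_add]
          apply le_of_lt (mul_neg_of_pos_of_neg hwpos (by linarith [hup.2]))
        have ha0 : a j = 0 := by simp [ha, hlow]
        have hk0 : k j = 0 := by
          have h2 : ¬ XB < β j := by linarith
          simp [hk, hw0, h2]
        rw [max_eq_left h0, ha0, hk0]; ring
      · have hcond : ¬(w j = 0 ∨ β j < -XB) := not_or.mpr ⟨hw0, hlow⟩
        have hmul : ∀ y : ℝ, max 0 (‖w j‖ * y) = ‖w j‖ * max 0 y := by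
          intro y; rw [mul_max_of_nonneg _ _ hwpos.le, mul_zero]
        by_cases hhigh : XB < β j
        · have h1 : 0 ≤ ⟪‖w j‖⁻¹ • w j, x⟫ + β j := by linarith [hup.1]
          have h2 : 0 ≤ ⟪‖w j‖⁻¹ • w j, x⟫ + XB := by linarith [hup.1]
          have h3 : 0 ≤ ⟪w j, x⟫ + b j := by
            rw [hinner, hb_eq, ← mul_add]; exact mul_nonneg hwpos.le h1
          rw [max_eq_right h3]
          simp only [ha, ht, hu, hk, if_neg hcond, if_neg hw0, if_pos hhigh,
            min_eq_right (le_of_lt hhigh)]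
          rw [max_eq_right h2, hinner, hb_eq]
          ring
        · have hmin : min (β j) XB = β j := min_eq_left (not_lt.mp hhigh)
          simp only [ha, ht, hu, hk, if_neg hcond, if_neg hw0, if_neg hhigh, hmin, add_zero]
          rw [hinner, hb_eq, ← mul_add, hmul]
          ring
  -- constant representation on D
  have hconst : ∀ x ∈ D, ∀ r : ℝ,
      r = r / (2 * XB) * max 0 (⟪e0, x⟫ + XB) + r / (2 * XB) * max 0 (⟪-e0, x⟫ + XB) := by
    intro x hx r
    have hxB := hD x hx
    have habs : |⟪e0, x⟫| ≤ XB := by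
      calc |⟪e0, x⟫| ≤ ‖e0‖ * ‖x‖ := abs_real_inner_le_norm _ _
      _ ≤ 1 * XB := by rw [he0, one_mul]; simpa using hxB
      _ = XB := one_mul _
    have h := abs_le.mp habs
    have hneg : ⟪-e0, x⟫ = -⟪e0, x⟫ := inner_neg_left e0 x
    rw [hneg, max_eq_right (by linarith), max_eq_right (by linarith)]
    field_simp
    ring
  refine ⟨N * 3,
    (fun p : Fin N × Fin 3 => ![a p.1, k p.1 / (2 * XB), k p.1 / (2 * XB)] p.2) ∘
      finProdFinEquiv.symm,
    (fun p : Fin N × Fin 3 => ![u p.1, e0, -e0] p.2) ∘ finProdFinEquiv.symm,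
    (fun p : Fin N × Fin 3 => ![t p.1, XB, XB] p.2) ∘ finProdFinEquiv.symm,
    ?_, ?_, ?_⟩
  · intro i
    obtain ⟨⟨j, m⟩, rfl⟩ := finProdFinEquiv.surjective i
    simp only [Function.comp_apply, Equiv.symm_apply_apply]
    fin_cases m
    · exact hu1 _
    · exact he0
    · simpa using he0
  · intro i
    obtain ⟨⟨j, m⟩, rfl⟩ := finProdFinEquiv.surjective i
    simp only [Function.comp_apply, Equiv.symm_apply_apply]
    fin_cases m
    · exact ht1 _
    · show -XB ≤ XB ∧ XB ≤ XB
      exact ⟨by linarith, le_rfl⟩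
    · show -XB ≤ XB ∧ XB ≤ XB
      exact ⟨by linarith, le_rfl⟩
  · intro x hx
    refine Eq.trans ?_ (Fintype.sum_equiv finProdFinEquiv
      (fun p : Fin N × Fin 3 =>
        (![a p.1, k p.1 / (2 * XB), k p.1 / (2 * XB)] p.2) *
          max 0 (⟪(![u p.1, e0, -e0] : Fin 3 → _) p.2, x⟫ + ![t p.1, XB, XB] p.2))
      _ (fun p => by simp only [Function.comp_apply, Equiv.symm_apply_apply]))
    rw [Fintype.sum_prod_type]
    refine Finset.sum_congr rfl fun j _ => ?_
    rw [Fin.sum_univ_three]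
    simp only [Matrix.cons_val_zero, Matrix.cons_val_one, Matrix.head_cons,
      Matrix.cons_val_two, Matrix.tail_cons]
    rw [key x hx j]
    linear_combination hconst x hx (k j)
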